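/- Let M(y) = a(y)e^{−b(y)} for y ≥ c > 0, where b(y) = B(log y) with B(u) = Au²/2 for a constant A > 0, and a(y) = y^{−p}(log y)^{q} for constants p, q ∈ ℝ. Then the fractional integral F₂M(σ) = ∫_σ^∞ (τ−σ)M(τ)dτ satisfies F₂M(σ) ~ M(σ)/b'(σ)² as σ → ∞, where b'(σ) = A·log(σ)/σ. -/

import Mathlib

open Filter MeasureTheory Set Topology

noncomputable def Mf (A p q y : ℝ) : ℝ :=
  y ^ (-p) * Real.log y ^ q * Real.exp (-A * Real.log y ^ 2 / 2)

lemma Mf_pos {A p q y : ℝ} (hy : 1 < y) : 0 < Mf A p q y := by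
  have h0 : 0 < y := by linarith
  have hl : 0 < Real.log y := Real.log_pos hy
  unfold Mf
  positivity

lemma Mf_measurable (A p q : ℝ) : Measurable (Mf A p q) := by
  unfold Mf
  have h1 : Measurable fun y : ℝ => y ^ (-p) := measurable_id.pow measurable_const
  have h2 : Measurable fun y : ℝ => Real.log y ^ q := Real.measurable_log.pow measurable_const
  have h3 : Measurable fun y : ℝ => Real.exp (-A * Real.log y ^ 2 / 2) :=
    Real.measurable_exp.comp (((Real.measurable_log.pow_const 2).const_mul (-A)).div_const 2)
  exact (h1.mul h2).mul h3

lemma log_one_add_ge {x : ℝ} (hx : 0 ≤ x) : x / (1 + x) ≤ Real.log (1 + x) := by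
  have h1 : (0:ℝ) < 1 + x := by linarith
  have h2 := Real.one_sub_inv_le_log_of_pos h1
  have h3 : 1 - (1 + x)⁻¹ = x / (1 + x) := by field_simp; ring
  linarith [h3 ▸ h2]

lemma phi_mono {t : ℝ} (ht : 0 ≤ t) :
    MonotoneOn (fun n : ℝ => n * Real.log (1 + t / n)) (Set.Ioi 0) := by
  have hderiv : ∀ n ∈ Set.Ioi (0:ℝ), HasDerivAt (fun n : ℝ => n * Real.log (1 + t / n))
      (Real.log (1 + t / n) + n * ((t * (-(n ^ 2)⁻¹)) / (1 + t / n))) n := by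
    intro n hn
    have hn0 : (0:ℝ) < n := hn
    have hpos : 0 < 1 + t / n := by
      have : 0 ≤ t / n := div_nonneg ht hn0.le
      linarith
    have hg : HasDerivAt (fun n : ℝ => 1 + t / n) (t * (-(n ^ 2)⁻¹)) n := by
      simpa [div_eq_mul_inv] using (((hasDerivAt_inv hn0.ne').const_mul t).const_add 1)
    have hlog := hg.log hpos.ne'
    simpa [div_eq_mul_inv, mul_comm] using (hasDerivAt_id n).fun_mul hlog
  apply monotoneOn_of_deriv_nonneg (convex_Ioi 0)
  · exact fun n hn => ((hderiv n hn).continuousAt).continuousWithinAt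
  · intro n hn
    rw [interior_Ioi] at hn
    exact ((hderiv n hn).differentiableAt).differentiableWithinAt
  · intro n hn
    rw [interior_Ioi] at hn
    have hn0 : (0:ℝ) < n := hn
    rw [(hderiv n hn).deriv]
    have hx : 0 ≤ t / n := div_nonneg ht hn0.le
    have key := log_one_add_ge hx
    have e : n * ((t * (-(n ^ 2)⁻¹)) / (1 + t / n)) = -((t/n) / (1 + t/n)) := by
      field_simp
    rw [e]
    linarith

lemma Mf_ratio (A p q : ℝ) {σ r : ℝ} (hσ : 1 < σ) (hr : 1 ≤ r) (hs : 0 < Real.log σ) :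
    Mf A p q (σ * r) = Mf A p q σ * (r ^ (-p) * (1 + Real.log r / Real.log σ) ^ q *
      Real.exp (-(A * Real.log σ * Real.log r) - A * Real.log r ^ 2 / 2)) := by
  have hσ0 : (0:ℝ) < σ := by linarith
  have hr0 : (0:ℝ) < r := by linarith
  have hL : 0 ≤ Real.log r := Real.log_nonneg hr
  unfold Mf
  rw [Real.log_mul hσ0.ne' hr0.ne']
  have e1 : (σ * r) ^ (-p) = σ ^ (-p) * r ^ (-p) := Real.mul_rpow hσ0.le hr0.le
  have e2 : (Real.log σ + Real.log r) ^ q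
      = Real.log σ ^ q * (1 + Real.log r / Real.log σ) ^ q := by
    rw [← Real.mul_rpow hs.le (by positivity)]
    congr 1
    field_simp
  have e3 : Real.exp (-A * (Real.log σ + Real.log r) ^ 2 / 2)
      = Real.exp (-A * Real.log σ ^ 2 / 2) *
        Real.exp (-(A * Real.log σ * Real.log r) - A * Real.log r ^ 2 / 2) := by
    rw [← Real.exp_add]
    congr 1
    ring
  rw [e1, e2, e3]
  ring

lemma ratio_le (A p q : ℝ) (hA : 0 < A) {σ t : ℝ} (ht : 0 < t)
    (hs1 : 1 ≤ Real.log σ) (hσ1 : 1 < σ)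
    (hn : 2 * (|p| + |q|) + 6 ≤ A * Real.log σ) :
    Mf A p q (σ * (1 + t / (A * Real.log σ))) / Mf A p q σ
      ≤ Real.exp (-((2 * (|p| + |q|) + 6) / 2) * Real.log (1 + t / (2 * (|p| + |q|) + 6))) := by
  set K : ℝ := |p| + |q| with hK
  have hK0 : 0 ≤ K := by positivity
  set n₀ : ℝ := 2 * K + 6 with hn₀
  have hn₀pos : 0 < n₀ := by positivity
  set s : ℝ := Real.log σ with hs
  set n : ℝ := A * s with hndef
  have hnpos : 0 < n := lt_of_lt_of_le hn₀pos hn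
  set r : ℝ := 1 + t / n with hrdef
  have htn : 0 < t / n := div_pos ht hnpos
  have hr1 : 1 < r := by simp only [hrdef]; linarith
  have hr0 : 0 < r := by linarith
  set L : ℝ := Real.log r with hL
  have hL0 : 0 ≤ L := Real.log_nonneg hr1.le
  have hspos : 0 < s := by linarith
  rw [Mf_ratio A p q hσ1 hr1.le hspos, mul_div_cancel_left₀ _ (Mf_pos hσ1).ne']
  rw [← hs, ← hL]
  clear_value K n₀ s n r L
  have base1 : (1:ℝ) ≤ 1 + L / s := by
    have : 0 ≤ L / s := div_nonneg hL0 hspos.le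
    linarith
  have hbase_le : 1 + L / s ≤ r := by
    have h1 : L / s ≤ L := div_le_self hL0 hs1
    have h2 : L ≤ r - 1 := by rw [hL]; exact Real.log_le_sub_one_of_pos hr0
    nlinarith
  have a1 : r ^ (-p) ≤ Real.exp (L * |p|) := by
    calc r ^ (-p) ≤ r ^ |p| := Real.rpow_le_rpow_of_exponent_le hr1.le (neg_le_abs p)
      _ = Real.exp (L * |p|) := by rw [Real.rpow_def_of_pos hr0, ← hL]
  have a2 : (1 + L / s) ^ q ≤ Real.exp (L * |q|) := by
    calc (1 + L / s) ^ q ≤ (1 + L / s) ^ |q| :=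
          Real.rpow_le_rpow_of_exponent_le base1 (le_abs_self q)
      _ ≤ r ^ |q| := Real.rpow_le_rpow (by linarith) hbase_le (abs_nonneg q)
      _ = Real.exp (L * |q|) := by rw [Real.rpow_def_of_pos hr0, ← hL]
  have a3 : Real.exp (-(A * s * L) - A * L ^ 2 / 2) ≤ Real.exp (-(n * L)) := by
    apply Real.exp_le_exp.mpr
    have h0 : 0 ≤ A * L ^ 2 / 2 := by positivity
    rw [hndef]
    linarith
  calc r ^ (-p) * (1 + L / s) ^ q * Real.exp (-(A * s * L) - A * L ^ 2 / 2)
      ≤ Real.exp (L * |p|) * Real.exp (L * |q|) * Real.exp (-(n * L)) := by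
        apply mul_le_mul
        · exact mul_le_mul a1 a2 (Real.rpow_nonneg (by linarith) q) (Real.exp_nonneg _)
        · exact a3
        · positivity
        · positivity
    _ = Real.exp (L * |p| + L * |q| + -(n * L)) := by rw [← Real.exp_add, ← Real.exp_add]
    _ ≤ Real.exp (-((1:ℝ)/2) * (n * L)) := by
        apply Real.exp_le_exp.mpr
        nlinarith [mul_nonneg (show (0:ℝ) ≤ n / 2 - K by linarith) hL0, hK]
    _ ≤ Real.exp (-(n₀ / 2) * Real.log (1 + t / n₀)) := by
        apply Real.exp_le_exp.mpr
        have hmono := phi_mono ht.le (Set.mem_Ioi.mpr hn₀pos)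
          (Set.mem_Ioi.mpr hnpos) (le_trans (le_refl n₀) hn)
        simp only at hmono
        rw [hL, hrdef]
        nlinarith [hmono]

lemma arg_eq (A : ℝ) {σ t : ℝ} (hs : Real.log σ ≠ 0) (hA : A ≠ 0) :
    σ + σ / (A * Real.log σ) * t = σ * (1 + t / (A * Real.log σ)) := by
  field_simp

lemma F_tendsto (A p q : ℝ) (hA : 0 < A) {t : ℝ} (ht : 0 < t) :
    Tendsto (fun σ : ℝ => t * (Mf A p q (σ + σ / (A * Real.log σ) * t) / Mf A p q σ))
      atTop (𝓝 (t * Real.exp (-t))) := by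
  have hlog : Tendsto Real.log atTop atTop := Real.tendsto_log_atTop
  have hx : Tendsto (fun σ : ℝ => t / (A * Real.log σ)) atTop (𝓝 0) :=
    Tendsto.div_atTop tendsto_const_nhds (hlog.const_mul_atTop hA)
  have hr : Tendsto (fun σ : ℝ => 1 + t / (A * Real.log σ)) atTop (𝓝 1) := by
    simpa using tendsto_const_nhds.add hx
  have hL : Tendsto (fun σ : ℝ => Real.log (1 + t / (A * Real.log σ))) atTop (𝓝 0) := by
    have := (Real.continuousAt_log one_ne_zero).tendsto.comp hr
    simpa [Function.comp_def] using this
  have h1 : Tendsto (fun σ : ℝ => (1 + t / (A * Real.log σ)) ^ (-p)) atTop (𝓝 1) := by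
    simpa using hr.rpow_const (Or.inl one_ne_zero)
  have h2 : Tendsto (fun σ : ℝ =>
      (1 + Real.log (1 + t / (A * Real.log σ)) / Real.log σ) ^ q) atTop (𝓝 1) := by
    have hq : Tendsto (fun σ : ℝ =>
        1 + Real.log (1 + t / (A * Real.log σ)) / Real.log σ) atTop (𝓝 1) := by
      simpa using tendsto_const_nhds.add (hL.div_atTop hlog)
    simpa using hq.rpow_const (Or.inl one_ne_zero)
  have h3 : Tendsto (fun σ : ℝ =>
      A * Real.log σ * Real.log (1 + t / (A * Real.log σ))) atTop (𝓝 t) := by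
    have key := (Real.tendsto_mul_log_one_add_div_atTop (t / A)).comp hlog
    have key2 : Tendsto (fun σ : ℝ => Real.log σ * Real.log (1 + t / (A * Real.log σ)))
        atTop (𝓝 (t / A)) :=
      key.congr fun σ => by simp [Function.comp, div_div]
    have := key2.const_mul A
    simpa [mul_assoc, mul_div_cancel₀ t hA.ne'] using this
  have hinner : Tendsto (fun σ : ℝ =>
      -(A * Real.log σ * Real.log (1 + t / (A * Real.log σ)))
        - A * Real.log (1 + t / (A * Real.log σ)) ^ 2 / 2) atTop (𝓝 (-t)) := by
    have hsq : Tendsto (fun σ : ℝ =>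
        A * Real.log (1 + t / (A * Real.log σ)) ^ 2 / 2) atTop (𝓝 0) := by
      have := ((hL.pow 2).const_mul A).div_const 2
      simpa using this
    have := (h3.neg).sub hsq
    simpa using this
  have h5 : Tendsto (fun σ : ℝ =>
      Real.exp (-(A * Real.log σ * Real.log (1 + t / (A * Real.log σ)))
        - A * Real.log (1 + t / (A * Real.log σ)) ^ 2 / 2)) atTop (𝓝 (Real.exp (-t))) :=
    (Real.continuous_exp.tendsto _).comp hinner
  have main : Tendsto (fun σ : ℝ => t *
      ((1 + t / (A * Real.log σ)) ^ (-p) *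
        (1 + Real.log (1 + t / (A * Real.log σ)) / Real.log σ) ^ q *
        Real.exp (-(A * Real.log σ * Real.log (1 + t / (A * Real.log σ)))
          - A * Real.log (1 + t / (A * Real.log σ)) ^ 2 / 2)))
      atTop (𝓝 (t * (1 * 1 * Real.exp (-t)))) :=
    tendsto_const_nhds.mul ((h1.mul h2).mul h5)
  rw [show t * (1 * 1 * Real.exp (-t)) = t * Real.exp (-t) by ring] at main
  apply Tendsto.congr' _ main
  filter_upwards [hlog.eventually_gt_atTop 0, eventually_gt_atTop (1:ℝ)] with σ hs hσ
  have hAs : 0 < A * Real.log σ := by positivity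
  have hr1 : (1:ℝ) ≤ 1 + t / (A * Real.log σ) := by
    have : 0 < t / (A * Real.log σ) := div_pos ht hAs
    linarith
  rw [arg_eq A hs.ne' hA.ne', Mf_ratio A p q hσ hr1 hs,
    mul_div_cancel_left₀ _ (Mf_pos hσ).ne']

lemma gamma_int : ∫ t in Set.Ioi (0:ℝ), t * Real.exp (-t) = 1 := by
  calc ∫ t in Set.Ioi (0:ℝ), t * Real.exp (-t)
      = ∫ x in Set.Ioi (0:ℝ), Real.exp (-x) * x ^ ((2:ℝ) - 1) := by
        refine setIntegral_congr_fun measurableSet_Ioi fun x hx => ?_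
        rw [show (2:ℝ) - 1 = 1 by norm_num, Real.rpow_one]
        ring
    _ = Real.Gamma 2 := (Real.Gamma_eq_integral (by norm_num)).symm
    _ = 1 := Real.Gamma_two

lemma bound_integrable {n₀ : ℝ} (hn₀ : 6 ≤ n₀) :
    IntegrableOn (fun t : ℝ => t * Real.exp (-(n₀ / 2) * Real.log (1 + t / n₀)))
      (Set.Ioi (0:ℝ)) := by
  have hn₀0 : (0:ℝ) < n₀ := by linarith
  rw [← Set.Ioc_union_Ioi_eq_Ioi (zero_le_one (α := ℝ)), integrableOn_union]
  constructor
  · apply IntegrableOn.mono_set _ Set.Ioc_subset_Icc_self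
    apply ContinuousOn.integrableOn_Icc
    apply ContinuousOn.mul continuousOn_id
    apply Real.continuous_exp.comp_continuousOn
    apply ContinuousOn.mul continuousOn_const
    apply ContinuousOn.log
    · exact (continuousOn_const.add (continuousOn_id.div_const n₀))
    · intro x hx
      have : (0:ℝ) ≤ x := hx.1
      have : 0 ≤ x / n₀ := by positivity
      nlinarith
  · have hexp : (1:ℝ) - n₀ / 2 < -1 := by linarith
    have hg : IntegrableOn (fun t : ℝ => n₀ ^ (n₀ / 2) * t ^ ((1:ℝ) - n₀ / 2))
        (Set.Ioi (1:ℝ)) :=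
      (integrableOn_Ioi_rpow_of_lt hexp zero_lt_one).const_mul _
    apply Integrable.mono' hg
    · apply Measurable.aestronglyMeasurable
      apply measurable_id.mul
      exact Real.measurable_exp.comp
        ((Real.measurable_log.comp (measurable_const.add (measurable_id.div_const n₀))).const_mul _)
    · rw [ae_restrict_iff' measurableSet_Ioi]
      apply ae_of_all
      intro tx htx
      have ht1 : (1:ℝ) < tx := htx
      have ht0 : (0:ℝ) < tx := by linarith
      have hb0 : (0:ℝ) < tx / n₀ := by positivity
      have hb1 : (0:ℝ) < 1 + tx / n₀ := by linarith
      have e1 : Real.exp (-(n₀ / 2) * Real.log (1 + tx / n₀))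
          = (1 + tx / n₀) ^ (-(n₀ / 2)) := by
        rw [Real.rpow_def_of_pos hb1, mul_comm]
      have e2 : (1 + tx / n₀) ^ (-(n₀ / 2)) ≤ (tx / n₀) ^ (-(n₀ / 2)) :=
        Real.rpow_le_rpow_of_nonpos hb0 (by linarith) (by linarith)
      have e3 : tx * (tx / n₀) ^ (-(n₀ / 2)) = n₀ ^ (n₀ / 2) * tx ^ ((1:ℝ) - n₀ / 2) := by
        rw [Real.div_rpow ht0.le hn₀0.le, Real.rpow_neg ht0.le, Real.rpow_neg hn₀0.le,
          Real.rpow_sub ht0, Real.rpow_one]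
        field_simp
      have hnn : 0 ≤ tx * Real.exp (-(n₀ / 2) * Real.log (1 + tx / n₀)) := by positivity
      rw [Real.norm_eq_abs, abs_of_nonneg hnn, e1]
      calc tx * (1 + tx / n₀) ^ (-(n₀ / 2)) ≤ tx * (tx / n₀) ^ (-(n₀ / 2)) := by
            apply mul_le_mul_of_nonneg_left e2 ht0.le
        _ = n₀ ^ (n₀ / 2) * tx ^ ((1:ℝ) - n₀ / 2) := e3

lemma subst_eq (A p q : ℝ) (hA : 0 < A) {σ : ℝ} (hσ : 1 < σ) (hs : 0 < Real.log σ) :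
    (∫ τ in Set.Ioi σ, (τ - σ) * Mf A p q τ) /
        (Mf A p q σ / (A * Real.log σ / σ) ^ 2)
      = ∫ t in Set.Ioi (0:ℝ),
          t * (Mf A p q (σ + σ / (A * Real.log σ) * t) / Mf A p q σ) := by
  have hσ0 : (0:ℝ) < σ := by linarith
  set c : ℝ := σ / (A * Real.log σ) with hcdef
  have hc : 0 < c := by positivity
  set g : ℝ → ℝ := fun τ => (τ - σ) * Mf A p q τ with hg
  have step1 : (∫ τ in Set.Ioi σ, g τ) = ∫ x in Set.Ioi (0:ℝ), g (x + σ) := by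
    have h := (measurePreserving_add_right volume σ).setIntegral_preimage_emb
      (MeasurableEquiv.addRight σ).measurableEmbedding g (Set.Ioi σ)
    rw [preimage_add_const_Ioi, sub_self] at h
    exact h.symm
  have step2 : (∫ x in Set.Ioi (0:ℝ), g (x + σ))
      = c * ∫ t in Set.Ioi (0:ℝ), g (c * t + σ) := by
    have h := MeasureTheory.integral_comp_mul_left_Ioi (fun x => g (x + σ)) 0 hc
    rw [mul_zero] at h
    rw [h, smul_eq_mul, ← mul_assoc, mul_inv_cancel₀ hc.ne', one_mul]
  have step3 : (∫ t in Set.Ioi (0:ℝ), g (c * t + σ))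
      = c * ∫ t in Set.Ioi (0:ℝ), t * Mf A p q (σ + c * t) := by
    rw [← integral_const_mul]
    congr 1
    funext t
    simp only [hg]
    rw [add_sub_cancel_right, add_comm]
    ring
  have hM : 0 < Mf A p q σ := Mf_pos hσ
  have hden : A * Real.log σ / σ = c⁻¹ := by
    rw [hcdef]
    field_simp
  rw [step1, step2, step3, hden]
  rw [show (∫ t in Set.Ioi (0:ℝ), t * (Mf A p q (σ + c * t) / Mf A p q σ))
      = (∫ t in Set.Ioi (0:ℝ), t * Mf A p q (σ + c * t)) / Mf A p q σ by
    rw [← integral_div]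
    congr 1
    funext t
    ring]
  rw [inv_pow]
  have hne : Mf A p q σ ≠ 0 := hM.ne'
  field_simp

/-- For M(y) = y^{−p}(log y)^q exp(−A(log y)²/2) with A > 0, the fractional integral of
order two F₂M(σ) = ∫_σ^∞ (τ−σ)M(τ)dτ satisfies F₂M(σ) ~ M(σ)/b'(σ)² as σ → ∞, where
b'(σ) = A log(σ)/σ. -/
theorem fractional_integral_asymp (A p q : ℝ) (hA : 0 < A) :
    Tendsto (fun σ : ℝ =>
        (∫ τ in Set.Ioi σ, (τ - σ) *
            (τ ^ (-p) * Real.log τ ^ q * Real.exp (-A * Real.log τ ^ 2 / 2))) /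
          ((σ ^ (-p) * Real.log σ ^ q * Real.exp (-A * Real.log σ ^ 2 / 2)) /
            (A * Real.log σ / σ) ^ 2))
      atTop (nhds 1) := by
  have hlog : Tendsto Real.log atTop atTop := Real.tendsto_log_atTop
  set n₀ : ℝ := 2 * (|p| + |q|) + 6 with hn₀def
  have hn₀6 : (6:ℝ) ≤ n₀ := by
    have := abs_nonneg p
    have := abs_nonneg q
    rw [hn₀def]
    linarith
  have hDCT : Tendsto (fun σ : ℝ => ∫ t in Set.Ioi (0:ℝ),
      t * (Mf A p q (σ + σ / (A * Real.log σ) * t) / Mf A p q σ)) atTop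
      (𝓝 (∫ t in Set.Ioi (0:ℝ), t * Real.exp (-t))) := by
    apply MeasureTheory.tendsto_integral_filter_of_dominated_convergence
      (fun t : ℝ => t * Real.exp (-(n₀ / 2) * Real.log (1 + t / n₀)))
    · apply Eventually.of_forall
      intro σ
      apply Measurable.aestronglyMeasurable
      exact measurable_id.mul
        (((Mf_measurable A p q).comp
          (measurable_const.add (measurable_id.const_mul _))).div_const _)
    · filter_upwards [hlog.eventually_ge_atTop 1,
        (hlog.const_mul_atTop hA).eventually_ge_atTop n₀,
        eventually_gt_atTop (1:ℝ)] with σ hs1 hsn hσ1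
      rw [ae_restrict_iff' measurableSet_Ioi]
      apply ae_of_all
      intro t ht
      have ht0 : (0:ℝ) < t := ht
      have hs0 : (0:ℝ) < Real.log σ := by linarith
      rw [arg_eq A hs0.ne' hA.ne']
      have hAs : 0 < A * Real.log σ := by positivity
      have hr1 : (1:ℝ) ≤ 1 + t / (A * Real.log σ) := by
        have : 0 < t / (A * Real.log σ) := div_pos ht0 hAs
        linarith
      have harg : 1 < σ * (1 + t / (A * Real.log σ)) :=
        lt_of_lt_of_le hσ1 (le_mul_of_one_le_right (by linarith) hr1)
      have hratio_nonneg : 0 ≤ Mf A p q (σ * (1 + t / (A * Real.log σ))) / Mf A p q σ :=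
        le_of_lt (div_pos (Mf_pos harg) (Mf_pos hσ1))
      rw [Real.norm_eq_abs, abs_of_nonneg (mul_nonneg ht0.le hratio_nonneg)]
      have := ratio_le A p q hA ht0 hs1 hσ1 (by rw [← hn₀def]; exact hsn)
      calc t * (Mf A p q (σ * (1 + t / (A * Real.log σ))) / Mf A p q σ)
          ≤ t * Real.exp (-(n₀ / 2) * Real.log (1 + t / n₀)) := by
            apply mul_le_mul_of_nonneg_left _ ht0.le
            rw [hn₀def]
            exact this
        _ = t * Real.exp (-(n₀ / 2) * Real.log (1 + t / n₀)) := rfl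
    · exact bound_integrable hn₀6
    · rw [ae_restrict_iff' measurableSet_Ioi]
      apply ae_of_all
      intro t ht
      exact F_tendsto A p q hA ht
  rw [gamma_int] at hDCT
  apply Tendsto.congr' _ hDCT
  filter_upwards [hlog.eventually_gt_atTop 0, eventually_gt_atTop (1:ℝ)] with σ hs hσ
  exact (subst_eq A p q hA hσ hs).symm
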